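/- arXiv:1407.2053 — 3 statements merged into one kernel-verified Lean document; each statement's English description precedes it below -/
import Mathlib

section
/- For every simple hypergraph H, tr(tr(H)) = H, where tr denotes the hypergraph of minimal transversals. -/
open Set

variable {α : Type*}

/-- `T` is a transversal of the hypergraph with hyperedge set `E`. -/
def Transversal (E : Set (Set α)) (T : Set α) : Prop := ∀ e ∈ E, (T ∩ e).Nonempty

/-- The hypergraph of minimal transversals of `E`. -/
def tr (E : Set (Set α)) : Set (Set α) := {T | Minimal (Transversal E) T}

/-- A hypergraph (given by its hyperedge set `E ⊆ 2^α \ {∅}`) is simple if its hyperedges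
are pairwise incomparable and every vertex belongs to some hyperedge. -/
def SimpleHypergraph (E : Set (Set α)) : Prop :=
  (∀ e ∈ E, ∀ e' ∈ E, e ⊆ e' → e = e') ∧ (∀ x : α, ∃ e ∈ E, x ∈ e) ∧ ∅ ∉ E

lemma shrink [Fintype α] {E : Set (Set α)} {T : Set α} (hT : Transversal E T) :
    ∃ M, M ⊆ T ∧ M ∈ tr E := by
  obtain ⟨M, hMT, hM⟩ := exists_minimal_le_of_wellFoundedLT _ _ hT
  exact ⟨M, hMT, hM⟩

/-- Each edge of a simple hypergraph is a minimal transversal of `tr E`. -/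
lemma edge_mem [Fintype α] {E : Set (Set α)} (hE : SimpleHypergraph E) {e : Set α}
    (he : e ∈ E) : e ∈ tr (tr E) := by
  obtain ⟨hanti, -, hne⟩ := hE
  constructor
  · intro T hT
    obtain ⟨x, hx⟩ := hT.1 e he
    exact ⟨x, hx.2, hx.1⟩
  · intro S hS hSe
    -- show e ⊆ S
    by_contra hcon
    obtain ⟨x, hxe, hxS⟩ := not_subset.mp hcon
    -- T₀ = eᶜ ∪ {x} is a transversal of E
    have hT0 : Transversal E (eᶜ ∪ {x}) := by
      intro f hf
      by_cases hfe : f = e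
      · exact ⟨x, Or.inr rfl, hfe ▸ hxe⟩
      · have : ¬ f ⊆ e := fun h => hfe (hanti f hf e he h)
        obtain ⟨y, hyf, hye⟩ := not_subset.mp this
        exact ⟨y, Or.inl hye, hyf⟩
    obtain ⟨M, hMsub, hM⟩ := shrink hT0
    obtain ⟨y, hyS, hyM⟩ := hS M hM
    have := hMsub hyM
    rcases this with h | h
    · exact h (hSe hyS)
    · rw [mem_singleton_iff] at h
      exact hxS (h ▸ hyS)

/-- For every simple hypergraph `H`, `tr(tr(H)) = H`. -/
theorem stmt_1 [Fintype α] (E : Set (Set α)) (hE : SimpleHypergraph E) :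
    tr (tr E) = E := by
  ext T
  constructor
  · intro hT
    -- T contains some edge e
    have hedge : ∃ e ∈ E, e ⊆ T := by
      by_contra hcon
      push_neg at hcon
      have hTc : Transversal E Tᶜ := by
        intro f hf
        obtain ⟨y, hyf, hyT⟩ := not_subset.mp (hcon f hf)
        exact ⟨y, hyT, hyf⟩
      obtain ⟨M, hMsub, hM⟩ := shrink hTc
      obtain ⟨y, hyT, hyM⟩ := hT.1 M hM
      exact hMsub hyM hyT
    obtain ⟨e, he, heT⟩ := hedge
    have := hT.2 (edge_mem hE he).1 heT
    have : T = e := subset_antisymm this heT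
    exact this ▸ he
  · exact fun h => edge_mem hE h
end

section
/- For every simple hypergraph H and every vertex x of H, there exists a minimal transversal T of H with x ∈ T. -/
open Set

variable {α : Type*}

/-- Every vertex of a simple hypergraph belongs to some minimal transversal. -/
theorem stmt_2 [Fintype α] (E : Set (Set α)) (hE : SimpleHypergraph E) (x : α) :
    ∃ T : Set α, Minimal (Transversal E) T ∧ x ∈ T := by
  obtain ⟨hinc, hcov, hne⟩ := hE
  obtain ⟨e, heE, hxe⟩ := hcov x
  set S : Set α := (Set.univ \ e) ∪ {x} with hS
  have hSe : S ∩ e = {x} := by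
    ext y
    simp only [hS, Set.mem_inter_iff, Set.mem_union, Set.mem_diff, Set.mem_univ,
      Set.mem_singleton_iff, true_and]
    constructor
    · rintro ⟨hy1 | hy1, hy2⟩
      · exact absurd hy2 hy1
      · exact hy1
    · rintro rfl; exact ⟨Or.inr rfl, hxe⟩
  have hStr : Transversal E S := by
    intro e' he'
    by_cases hsub : e' ⊆ e
    · have : e' = e := hinc e' he' e heE hsub
      subst this
      exact ⟨x, Or.inr rfl, hxe⟩
    · obtain ⟨y, hy1, hy2⟩ := Set.not_subset.mp hsub
      exact ⟨y, Or.inl ⟨trivial, hy2⟩, hy1⟩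
  -- the collection of transversals contained in S
  have hfin : {T : Set α | Transversal E T ∧ T ⊆ S}.Finite := Set.toFinite _
  obtain ⟨T, ⟨hTtr, hTS⟩, hTmin⟩ :=
    (by obtain ⟨T, hT, hm⟩ := Set.Finite.exists_minimal hfin ⟨S, hStr, subset_rfl⟩; exact ⟨T, hT, fun T' h1 h2 => le_antisymm (hm h1 h2) h2⟩ :
      ∃ T ∈ {T : Set α | Transversal E T ∧ T ⊆ S}, ∀ T' ∈ {T : Set α | Transversal E T ∧ T ⊆ S}, T' ≤ T → T = T')
  have hxT : x ∈ T := by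
    obtain ⟨y, hy1, hy2⟩ := hTtr e heE
    have : y ∈ S ∩ e := ⟨hTS hy1, hy2⟩
    rw [hSe] at this
    rwa [this] at hy1
  refine ⟨T, ⟨hTtr, ?_⟩, hxT⟩
  intro T' hT' hT'T
  have : T = T' := hTmin T' ⟨hT', hT'T.trans hTS⟩ hT'T
  exact this.le
end

section
/- Let H be a hypergraph with every hyperedge nonempty and B(H) its co-bipartite incidence graph. Every minimal dominating set D of B(H) is either of the form {x, y_e} with x ∈ V(H) ∪ {v} and e ∈ E(H), or D ⊆ V(H) and D is a minimal transversal of H. -/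
open Set

variable {V ι : Type*}

/-- `T ⊆ V` is a transversal of the hypergraph whose hyperedges are `e i`, `i : ι`. -/
def TransversalI (e : ι → Set V) (T : Set V) : Prop := ∀ i, (T ∩ e i).Nonempty

/-- Auxiliary relation generating the co-bipartite incidence graph `B(H)`:
vertices are `some (Sum.inl x)` for `x ∈ V(H)`, `some (Sum.inr i)` for hyperedges,
and `none` is the extra vertex `v`. -/
def BRel (e : ι → Set V) : Option (V ⊕ ι) → Option (V ⊕ ι) → Prop
  | some (Sum.inl _), some (Sum.inl _) => True
  | some (Sum.inl x), some (Sum.inr i) => x ∈ e i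
  | some (Sum.inr _), some (Sum.inr _) => True
  | none, some (Sum.inl _) => True
  | _, _ => False

/-- The co-bipartite incidence graph `B(H)` of a hypergraph `H`. -/
def coBipIncidence (e : ι → Set V) : SimpleGraph (Option (V ⊕ ι)) :=
  SimpleGraph.fromRel (BRel e)

/-- The closed neighbourhood `N_G[A]` of a set of vertices. -/
def closedNbhdSet {W : Type*} (G : SimpleGraph W) (A : Set W) : Set W :=
  ⋃ x ∈ A, insert x (G.neighborSet x)

/-- `D` is a dominating set of `G`. -/
def Dominates {W : Type*} (G : SimpleGraph W) (D : Set W) : Prop :=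
  ∀ v, v ∈ closedNbhdSet G D

lemma dominates_iff {W : Type*} (G : SimpleGraph W) (A : Set W) :
    Dominates G A ↔ ∀ w, ∃ d ∈ A, w = d ∨ G.Adj d w := by
  simp [Dominates, closedNbhdSet, SimpleGraph.mem_neighborSet]

lemma adj_none_inl (e : ι → Set V) (x : V) :
    (coBipIncidence e).Adj none (some (Sum.inl x)) := by
  simp [coBipIncidence, SimpleGraph.fromRel_adj, BRel]

lemma adj_inl_inl (e : ι → Set V) {x y : V} (h : x ≠ y) :
    (coBipIncidence e).Adj (some (Sum.inl x)) (some (Sum.inl y)) := by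
  simp [coBipIncidence, SimpleGraph.fromRel_adj, BRel, h]

lemma adj_inl_inr (e : ι → Set V) {x : V} {i : ι} (h : x ∈ e i) :
    (coBipIncidence e).Adj (some (Sum.inl x)) (some (Sum.inr i)) := by
  simp [coBipIncidence, SimpleGraph.fromRel_adj, BRel, h]

lemma adj_inr_inr (e : ι → Set V) {i j : ι} (h : i ≠ j) :
    (coBipIncidence e).Adj (some (Sum.inr i)) (some (Sum.inr j)) := by
  simp [coBipIncidence, SimpleGraph.fromRel_adj, BRel, h]

lemma adj_none_elim (e : ι → Set V) {d : Option (V ⊕ ι)}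
    (h : (coBipIncidence e).Adj d none) : ∃ x : V, d = some (Sum.inl x) := by
  rcases d with _ | (x | i) <;>
    simp_all [coBipIncidence, SimpleGraph.fromRel_adj, BRel]

lemma adj_inr_elim (e : ι → Set V) {d : Option (V ⊕ ι)} {i : ι}
    (h : (coBipIncidence e).Adj d (some (Sum.inr i)))
    (hd : ∀ j : ι, d ≠ some (Sum.inr j)) : ∃ x : V, d = some (Sum.inl x) ∧ x ∈ e i := by
  rcases d with _ | (x | j) <;>
    simp_all [coBipIncidence, SimpleGraph.fromRel_adj, BRel]

/-- Every minimal dominating set of `B(H)` is either of the form `{a, y_i}` with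
`a ∈ V(H) ∪ {v}` and `i` a hyperedge, or is (the copy of) a minimal transversal of `H`. -/
theorem stmt_6 [Nonempty ι] (e : ι → Set V) (he : ∀ i, (e i).Nonempty)
    (D : Set (Option (V ⊕ ι))) (hD : Minimal (Dominates (coBipIncidence e)) D) :
    (∃ (a : Option (V ⊕ ι)) (i : ι),
        (a = none ∨ ∃ x : V, a = some (Sum.inl x)) ∧ D = {a, some (Sum.inr i)}) ∨
    (∃ T : Set V, Minimal (TransversalI e) T ∧ D = (fun x => some (Sum.inl x)) '' T) := by
  classical
  obtain ⟨hdom, hmin⟩ := hD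
  rw [dominates_iff] at hdom
  -- element of D dominating `none`
  obtain ⟨d, hdD, hd⟩ := hdom none
  have hdshape : d = none ∨ ∃ x : V, d = some (Sum.inl x) := by
    rcases hd with h | h
    · exact Or.inl h.symm
    · exact Or.inr (adj_none_elim e h)
  -- `d` dominates `none` and all `inl` vertices
  have hddom : ∀ w : Option (V ⊕ ι), (w = none ∨ ∃ x : V, w = some (Sum.inl x)) →
      (w = d ∨ (coBipIncidence e).Adj d w) := by
    rintro w hw
    rcases hdshape with rfl | ⟨x, rfl⟩
    · rcases hw with rfl | ⟨y, rfl⟩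
      · exact Or.inl rfl
      · exact Or.inr (adj_none_inl e y)
    · rcases hw with rfl | ⟨y, rfl⟩
      · exact Or.inr ((adj_none_inl e x).symm)
      · by_cases hxy : x = y
        · exact Or.inl (by rw [hxy])
        · exact Or.inr (adj_inl_inl e hxy)
  by_cases hyr : ∃ j : ι, some (Sum.inr j) ∈ D
  · obtain ⟨j, hj⟩ := hyr
    left
    refine ⟨d, j, hdshape, ?_⟩
    have hsub : ({d, some (Sum.inr j)} : Set (Option (V ⊕ ι))) ⊆ D := by
      rintro w (rfl | rfl)
      · exact hdD
      · exact hj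
    have hdoms : Dominates (coBipIncidence e) {d, some (Sum.inr j)} := by
      rw [dominates_iff]
      intro w
      rcases w with _ | (x | i)
      · exact ⟨d, Or.inl rfl, hddom none (Or.inl rfl)⟩
      · exact ⟨d, Or.inl rfl, hddom _ (Or.inr ⟨x, rfl⟩)⟩
      · refine ⟨some (Sum.inr j), Or.inr rfl, ?_⟩
        by_cases hij : j = i
        · exact Or.inl (by rw [hij])
        · exact Or.inr (adj_inr_inr e hij)
    exact le_antisymm (hmin hdoms hsub) hsub
  · right
    push_neg at hyr
    set T : Set V := {x | some (Sum.inl x) ∈ D} with hT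
    have htrans : TransversalI e T := by
      intro i
      obtain ⟨d', hd'D, hd'⟩ := hdom (some (Sum.inr i))
      rcases hd' with h | h
      · exact absurd hd'D (by rw [← h]; exact hyr i)
      · obtain ⟨x, rfl, hx⟩ := adj_inr_elim e h (fun j hj => hyr j (hj ▸ hd'D))
        exact ⟨x, hd'D, hx⟩
    -- the image of any transversal dominates
    have himgdom : ∀ T' : Set V, TransversalI e T' →
        Dominates (coBipIncidence e) ((fun x => some (Sum.inl x)) '' T') := by
      intro T' hT'
      rw [dominates_iff]
      obtain ⟨x0, hx0, _⟩ := hT' (Classical.arbitrary ι)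
      intro w
      rcases w with _ | (x | i)
      · exact ⟨some (Sum.inl x0), ⟨x0, hx0, rfl⟩, Or.inr ((adj_none_inl e x0).symm)⟩
      · by_cases hx : x = x0
        · exact ⟨some (Sum.inl x0), ⟨x0, hx0, rfl⟩, Or.inl (by rw [hx])⟩
        · exact ⟨some (Sum.inl x0), ⟨x0, hx0, rfl⟩,
            Or.inr (adj_inl_inl e (fun h => hx h.symm))⟩
      · obtain ⟨y, hyT', hy⟩ := hT' i
        exact ⟨some (Sum.inl y), ⟨y, hyT', rfl⟩, Or.inr (adj_inl_inr e hy)⟩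
    -- `none ∉ D`
    have hnone : none ∉ D := by
      intro hnD
      have hsub : ((fun x => some (Sum.inl x)) '' T) ⊆ D := by
        rintro w ⟨x, hx, rfl⟩; exact hx
      have := hmin (himgdom T htrans) hsub hnD
      obtain ⟨x, _, hx⟩ := this
      exact Option.some_ne_none _ hx
    have hDeq : D = (fun x => some (Sum.inl x)) '' T := by
      apply Set.eq_of_subset_of_subset
      · rintro (_ | (x | i)) hw
        · exact absurd hw hnone
        · exact ⟨x, hw, rfl⟩
        · exact absurd hw (hyr i)
      · rintro w ⟨x, hx, rfl⟩; exact hx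
    refine ⟨T, ⟨htrans, ?_⟩, hDeq⟩
    intro T' hT' hle
    have hsub : ((fun x => some (Sum.inl x)) '' T') ⊆ D := by
      rintro w ⟨x, hx, rfl⟩; exact hle hx
    have hDsub := hmin (himgdom T' hT') hsub
    intro x hx
    have : some (Sum.inl x) ∈ (fun x => some (Sum.inl x)) '' T' := hDsub hx
    obtain ⟨y, hy, hyx⟩ := this
    obtain rfl : y = x := by injection hyx with h; injection h
    exact hy
end
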